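/- Let ω > 0 and k ≥ 1 an integer. The function U(r e^{iθ}, t) = Re( e^{ik(θ+ωt)} I_k( (√(2ωk)/2)(1+i) r ) ), where I_k is the modified Bessel function of the first kind of order k, is an entire eternal solution of the heat equation U_t − ΔU = 0 on ℝ² × ℝ. -/

import Mathlib

open Complex Real

/-- `Θ_ν(z) = Σ_{n≥0} (1/(n! Γ(n+1+ν))) (z/4)^n`. -/
noncomputable def Theta (ν z : ℂ) : ℂ :=
  ∑' n : ℕ, (1 / ((n.factorial : ℂ) * Complex.Gamma ((n : ℂ) + 1 + ν))) * (z / 4) ^ n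

/-- The modified Bessel function of the first kind of integer order `k`:
`I_k(z) = (z/2)^k Θ_k(z²)`. -/
noncomputable def besselI (k : ℕ) (z : ℂ) : ℂ :=
  (z / 2) ^ k * Theta (k : ℂ) (z ^ 2)

/-- The rotating caloric function
`U(re^{iθ}, t) = Re(e^{ik(θ+ωt)} I_k((√(2ωk)/2)(1+i) r))`, written in Cartesian
coordinates with `z = x + iy`, `r = |z|`, `θ = arg z`. -/
noncomputable def rotCaloric (ω : ℝ) (k : ℕ) (x y t : ℝ) : ℝ :=
  (Complex.exp (Complex.I * (k : ℂ) * ((Complex.arg (x + y * Complex.I) : ℂ) + (ω : ℂ) * (t : ℂ))) *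
    besselI k (((Real.sqrt (2 * ω * k) / 2 : ℝ) : ℂ) * (1 + Complex.I) *
      ((‖(x + y * Complex.I : ℂ)‖ : ℝ) : ℂ))).re


/-- Summability of series with coefficients dominated by `A^n/n!`. -/
lemma summable_coeff_pow {c : ℕ → ℂ} {A : ℝ} (hA : 0 ≤ A)
    (hc : ∀ n, ‖c n‖ ≤ A ^ n / (n.factorial : ℝ)) (w : ℂ) :
    Summable (fun n => c n * w ^ n) := by
  refine Summable.of_norm_bounded (g := fun n => (A * ‖w‖) ^ n / n.factorial)
    (Real.summable_pow_div_factorial (A * ‖w‖)) ?_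
  intro n
  simp only [norm_mul, norm_pow, mul_pow]
  calc ‖c n‖ * ‖w‖ ^ n ≤ A ^ n / (n.factorial : ℝ) * ‖w‖ ^ n :=
        mul_le_mul_of_nonneg_right (hc n) (by positivity)
    _ = A ^ n * ‖w‖ ^ n / n.factorial := by ring

/-- Termwise differentiation of an everywhere-dominated power series. -/
lemma hasDerivAt_tsum_pow {c : ℕ → ℂ} {A : ℝ} (hA : 0 ≤ A)
    (hc : ∀ n, ‖c n‖ ≤ A ^ n / (n.factorial : ℝ)) (z : ℂ) :
    HasDerivAt (fun w => ∑' n, c n * w ^ n)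
      (∑' n, (((n : ℕ) + 1 : ℕ) : ℂ) * c (n + 1) * z ^ n) z := by
  set R : ℝ := ‖z‖ + 1 with hR
  have hz0 : (0:ℝ) ≤ ‖z‖ := norm_nonneg z
  have hR1 : (1:ℝ) ≤ R := by linarith
  have hu : Summable (fun n : ℕ => (2 * A * R) ^ n / n.factorial) :=
    Real.summable_pow_div_factorial (2 * A * R)
  have bound : ∀ n : ℕ, ∀ y : ℂ, ‖y‖ ≤ R →
      ‖c n * ((n : ℂ) * y ^ (n - 1))‖ ≤ (2 * A * R) ^ n / n.factorial := by
    intro n y hyR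
    rw [norm_mul, norm_mul, Complex.norm_natCast, norm_pow]
    have h1 : (n : ℝ) ≤ 2 ^ n := by exact_mod_cast (Nat.lt_two_pow_self (n := n)).le
    have h2 : ‖y‖ ^ (n - 1) ≤ R ^ n :=
      le_trans (pow_le_pow_left₀ (norm_nonneg y) hyR _)
        (pow_le_pow_right₀ hR1 (Nat.sub_le n 1))
    calc ‖c n‖ * ((n : ℝ) * ‖y‖ ^ (n - 1))
        ≤ A ^ n / (n.factorial : ℝ) * ((2:ℝ) ^ n * R ^ n) := by
          apply mul_le_mul (hc n) ?_ (by positivity) (by positivity)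
          exact mul_le_mul h1 h2 (by positivity) (by positivity)
      _ = (2 * A * R) ^ n / n.factorial := by rw [mul_pow, mul_pow]; ring
  have key : HasDerivAt (fun w => ∑' n, c n * w ^ n)
      (∑' n, c n * ((n : ℂ) * z ^ (n - 1))) z := by
    refine hasDerivAt_tsum_of_isPreconnected hu (Metric.isOpen_ball)
      ((convex_ball (0:ℂ) R).isPreconnected) (y₀ := 0)
      (fun n y _ => (hasDerivAt_pow n y).const_mul (c n)) ?_ ?_
      (summable_coeff_pow hA hc 0) ?_
    · intro n y hy
      exact bound n y (by have := (mem_ball_zero_iff.mp hy).le; linarith)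
    · simp only [Metric.mem_ball, dist_zero_right, norm_zero]; linarith
    · simp only [Metric.mem_ball, dist_zero_right]; linarith
  have hs : Summable (fun n => c n * ((n : ℂ) * z ^ (n - 1))) := by
    refine Summable.of_norm_bounded (g := fun n : ℕ => (2 * A * R) ^ n / n.factorial) hu ?_
    intro n
    exact bound n z (by linarith)
  convert key using 1
  rw [hs.tsum_eq_zero_add]
  simp only [Nat.cast_zero, zero_mul, mul_zero, pow_zero, Nat.add_sub_cancel, zero_add]
  congr 1
  funext n
  push_cast
  ring

noncomputable def cc (k n : ℕ) : ℂ :=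
  ((n.factorial : ℂ) * ((n + k).factorial : ℂ))⁻¹ * ((4 : ℂ)⁻¹) ^ n

noncomputable def gg (k : ℕ) (z : ℂ) : ℂ := ∑' n, cc k n * z ^ n
noncomputable def gg1 (k : ℕ) (z : ℂ) : ℂ :=
  ∑' n, (((n : ℕ) + 1 : ℕ) : ℂ) * cc k (n + 1) * z ^ n
noncomputable def gg2 (k : ℕ) (z : ℂ) : ℂ :=
  ∑' n, (((n : ℕ) + 1 : ℕ) : ℂ) * ((((n + 1 : ℕ) + 1 : ℕ) : ℂ) * cc k (n + 1 + 1)) * z ^ n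

lemma cc_norm (k n : ℕ) :
    ‖cc k n‖ = ((n.factorial : ℝ) * ((n + k).factorial : ℝ))⁻¹ * ((4 : ℝ)⁻¹) ^ n := by
  simp [cc, norm_mul, norm_inv, norm_pow, Complex.norm_natCast]

lemma fact_cast_pos (m : ℕ) : (0:ℝ) < (m.factorial : ℝ) := by
  exact_mod_cast Nat.factorial_pos m

lemma aux_le_one (m : ℕ) : ((m.factorial : ℝ))⁻¹ ≤ 1 := by
  rw [inv_le_one_iff₀]; right; exact_mod_cast Nat.one_le_iff_ne_zero.mpr (Nat.factorial_ne_zero _)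

lemma quarter_pow_le_one (n : ℕ) : ((4 : ℝ)⁻¹) ^ n ≤ 1 := by
  apply pow_le_one₀ <;> norm_num

lemma cc_bound (k n : ℕ) : ‖cc k n‖ ≤ (1:ℝ) ^ n / (n.factorial : ℝ) := by
  rw [cc_norm, mul_inv, one_pow, div_eq_mul_inv, one_mul]
  calc (n.factorial : ℝ)⁻¹ * ((n + k).factorial : ℝ)⁻¹ * (4 : ℝ)⁻¹ ^ n
      ≤ (n.factorial : ℝ)⁻¹ * 1 * 1 := by
        apply mul_le_mul ?_ (quarter_pow_le_one n) (by positivity) (by positivity)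
        apply mul_le_mul le_rfl (aux_le_one _) (by positivity) (by positivity)
    _ = (n.factorial : ℝ)⁻¹ := by ring

lemma cc1_norm_le (k n : ℕ) :
    ‖(((n : ℕ) + 1 : ℕ) : ℂ) * cc k (n + 1)‖ ≤ (n.factorial : ℝ)⁻¹ := by
  rw [norm_mul, Complex.norm_natCast, cc_norm, mul_inv]
  have key : ((n+1 : ℕ) : ℝ) * ((n+1).factorial : ℝ)⁻¹ = (n.factorial : ℝ)⁻¹ := by
    rw [Nat.factorial_succ]
    push_cast
    rw [mul_inv, ← mul_assoc, mul_inv_cancel₀ (by positivity), one_mul]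
  calc ((n+1:ℕ):ℝ) * (((n+1).factorial : ℝ)⁻¹ * (((n+1+k).factorial : ℝ))⁻¹ * ((4:ℝ)⁻¹)^(n+1))
      ≤ ((n+1:ℕ):ℝ) * (((n+1).factorial : ℝ)⁻¹ * 1 * 1) := by
        apply mul_le_mul_of_nonneg_left ?_ (by positivity)
        apply mul_le_mul ?_ (quarter_pow_le_one _) (by positivity) (by positivity)
        apply mul_le_mul le_rfl (aux_le_one _) (by positivity) (by positivity)
    _ = (n.factorial : ℝ)⁻¹ := by rw [mul_one, mul_one]; exact key

lemma cc1_bound (k n : ℕ) :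
    ‖(((n : ℕ) + 1 : ℕ) : ℂ) * cc k (n + 1)‖ ≤ (1:ℝ) ^ n / (n.factorial : ℝ) := by
  rw [one_pow, div_eq_mul_inv, one_mul]; exact cc1_norm_le k n

lemma cc2_bound (k n : ℕ) :
    ‖(((n : ℕ) + 1 : ℕ) : ℂ) * ((((n + 1 : ℕ) + 1 : ℕ) : ℂ) * cc k (n + 1 + 1))‖
      ≤ (1:ℝ) ^ n / (n.factorial : ℝ) := by
  rw [one_pow, div_eq_mul_inv, one_mul, norm_mul, Complex.norm_natCast]
  calc ((n+1:ℕ):ℝ) * ‖((((n+1:ℕ)+1:ℕ)):ℂ) * cc k (n+1+1)‖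
      ≤ ((n+1:ℕ):ℝ) * ((n+1).factorial : ℝ)⁻¹ := by
        apply mul_le_mul_of_nonneg_left (cc1_norm_le k (n+1)) (by positivity)
    _ = (n.factorial : ℝ)⁻¹ := by
        rw [Nat.factorial_succ]
        push_cast
        rw [mul_inv, ← mul_assoc, mul_inv_cancel₀ (by positivity), one_mul]

lemma hcc_bound (k n : ℕ) :
    ‖((n:ℕ):ℂ) * ((((n+1:ℕ)):ℂ) * cc k (n+1))‖ ≤ (2:ℝ) ^ n / (n.factorial : ℝ) := by
  rw [norm_mul, Complex.norm_natCast, div_eq_mul_inv]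
  have h1 : (n : ℝ) ≤ 2 ^ n := by exact_mod_cast (Nat.lt_two_pow_self (n := n)).le
  calc (n:ℝ) * ‖(((n+1:ℕ)):ℂ) * cc k (n+1)‖
      ≤ (2:ℝ)^n * (n.factorial : ℝ)⁻¹ :=
        mul_le_mul h1 (cc1_norm_le k n) (norm_nonneg _) (by positivity)
    _ = (2:ℝ)^n * (n.factorial : ℝ)⁻¹ := rfl

lemma hasDerivAt_gg (k : ℕ) (z : ℂ) : HasDerivAt (gg k) (gg1 k z) z :=
  hasDerivAt_tsum_pow zero_le_one (cc_bound k) z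

lemma hasDerivAt_gg1 (k : ℕ) (z : ℂ) : HasDerivAt (gg1 k) (gg2 k z) z := by
  have h := hasDerivAt_tsum_pow (c := fun n => (((n : ℕ) + 1 : ℕ) : ℂ) * cc k (n + 1))
    zero_le_one (cc1_bound k) z
  convert h using 2 with n
  all_goals simp [gg1, gg2, mul_assoc]

lemma summable_gg1' (k : ℕ) (z : ℂ) :
    Summable (fun n => (((n : ℕ) + 1 : ℕ) : ℂ) * cc k (n + 1) * z ^ n) :=
  summable_coeff_pow zero_le_one (cc1_bound k) z

lemma summable_hcc (k : ℕ) (z : ℂ) :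
    Summable (fun n : ℕ => ((n:ℕ):ℂ) * ((((n+1:ℕ)):ℂ) * cc k (n+1)) * z ^ n) :=
  summable_coeff_pow (by norm_num) (hcc_bound k) z

lemma cc_succ (k n : ℕ) :
    cc k (n+1) = (((n:ℂ)+1))⁻¹ * (((n:ℂ)+(k:ℂ)+1))⁻¹ * 4⁻¹ * cc k n := by
  have h1 : ((n:ℂ)+1) ≠ 0 := Nat.cast_add_one_ne_zero n
  have h2 : ((n:ℂ)+(k:ℂ)+1) ≠ 0 := by exact_mod_cast Nat.succ_ne_zero (n+k)
  have f1 : ((n.factorial : ℂ)) ≠ 0 := by exact_mod_cast Nat.factorial_ne_zero n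
  have f2 : (((n+k).factorial : ℂ)) ≠ 0 := by exact_mod_cast Nat.factorial_ne_zero (n+k)
  rw [cc, cc, Nat.factorial_succ, show n+1+k = (n+k)+1 from by ring, Nat.factorial_succ, pow_succ]
  push_cast
  field_simp

/-- The key coefficient recurrence. -/
lemma cc_rec (k n : ℕ) :
    4 * ((((k:ℕ):ℂ) + 1) * ((((n+1:ℕ)):ℂ) * cc k (n+1)) + ((n:ℕ):ℂ) * ((((n+1:ℕ)):ℂ) * cc k (n+1)))
      = cc k n := by
  have h1 : ((n:ℂ)+1) ≠ 0 := Nat.cast_add_one_ne_zero n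
  have h2 : ((n:ℂ)+(k:ℂ)+1) ≠ 0 := by exact_mod_cast Nat.succ_ne_zero (n+k)
  rw [cc_succ]
  push_cast
  field_simp
  ring

/-- The Bessel-type ODE satisfied by `gg`:  `4((k+1)g' + z g'') = g`. -/
lemma gg_ode (k : ℕ) (z : ℂ) :
    4 * (((k : ℂ) + 1) * gg1 k z + z * gg2 k z) = gg k z := by
  have hzg2 : z * gg2 k z
      = ∑' n : ℕ, ((n:ℕ):ℂ) * ((((n+1:ℕ)):ℂ) * cc k (n+1)) * z ^ n := by
    rw [gg2, ← tsum_mul_left]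
    rw [(summable_hcc k z).tsum_eq_zero_add]
    simp only [Nat.cast_zero, zero_mul, zero_add, Nat.cast_ofNat]
    congr 1
    funext n
    push_cast
    ring
  rw [hzg2, gg1, ← tsum_mul_left (a := ((k:ℂ)+1)),
    ← Summable.tsum_add ((summable_gg1' k z).mul_left _) (summable_hcc k z), ← tsum_mul_left (a := (4:ℂ))]
  rw [gg]
  apply tsum_congr
  intro n
  have := cc_rec k n
  push_cast at this ⊢
  linear_combination z ^ n * this

lemma theta_eq_gg (k : ℕ) (z : ℂ) : Theta (k:ℂ) z = gg k z := by
  rw [Theta, gg]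
  apply tsum_congr
  intro n
  have hΓ : Complex.Gamma ((n:ℂ) + 1 + (k:ℂ)) = (((n+k).factorial : ℕ) : ℂ) := by
    rw [show ((n:ℂ) + 1 + (k:ℂ)) = (((n+k:ℕ)):ℂ) + 1 by push_cast; ring,
      Complex.Gamma_nat_eq_factorial]
  rw [hΓ, cc, one_div, div_pow, div_eq_mul_inv, ← inv_pow]
  ring

/-- Derivative of `Re` of a complex-valued function of a real variable. -/
lemma HasDerivAt.creal {f : ℝ → ℂ} {f' : ℂ} {x : ℝ} (h : HasDerivAt f f' x) :
    HasDerivAt (fun x => (f x).re) f'.re x := by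
  have := Complex.reCLM.hasFDerivAt.comp_hasDerivAt x h
  exact this

/-- Chain rule for a complex-differentiable function post-composed with ℝ → ℂ. -/
lemma HasDerivAt.comp_creal {f : ℝ → ℂ} {g : ℂ → ℂ} {g' f' : ℂ} {x : ℝ}
    (hg : HasDerivAt g g' (f x)) (hf : HasDerivAt f f' x) :
    HasDerivAt (fun x => g (f x)) (g' * f') x := by
  exact hg.comp x hf

lemma hasDerivAt_ofReal (x : ℝ) : HasDerivAt (fun a : ℝ => (a : ℂ)) 1 x := by
  have := Complex.ofRealCLM.hasDerivAt (x := x)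
  exact this

/-- Rewriting `rotCaloric` in terms of the entire series `gg`. -/
lemma rotCaloric_eq (ω : ℝ) (hω : 0 ≤ ω) (k : ℕ) (hk : 1 ≤ k) (x y t : ℝ) :
    rotCaloric ω k x y t =
      (Complex.exp (Complex.I * (k:ℂ) * ((ω:ℂ) * (t:ℂ))) *
          (((Real.sqrt (2*ω*k) / 2 : ℝ) : ℂ) * (1 + Complex.I) / 2) ^ k *
        (((x:ℂ) + (y:ℂ) * Complex.I) ^ k *
          gg k (Complex.I * (ω:ℂ) * (k:ℂ) * ((x:ℂ)^2 + (y:ℂ)^2)))).re := by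
  rw [rotCaloric, besselI]
  set z : ℂ := (x:ℂ) + (y:ℂ) * Complex.I with hz
  set c : ℂ := ((Real.sqrt (2*ω*k) / 2 : ℝ) : ℂ) * (1 + Complex.I) with hc
  congr 1
  have hc2 : c^2 = Complex.I * (ω:ℂ) * (k:ℂ) := by
    have h1 : (Real.sqrt (2*ω*(k:ℝ)))^2 = 2*ω*(k:ℝ) := Real.sq_sqrt (by positivity)
    have hI : ((1:ℂ) + Complex.I)^2 = 2*Complex.I := by linear_combination Complex.I_sq
    calc c^2 = ((((Real.sqrt (2*ω*(k:ℝ)))^2 : ℝ)) : ℂ)/4 * (((1:ℂ)+Complex.I)^2) := by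
          rw [hc]; push_cast; ring
      _ = Complex.I * (ω:ℂ) * (k:ℂ) := by rw [h1, hI]; push_cast; ring
  have habs : ((‖z‖ : ℝ) : ℂ)^2 = (x:ℂ)^2 + (y:ℂ)^2 := by
    rw [← Complex.ofReal_pow, Complex.sq_norm, hz, Complex.normSq_add_mul_I]
    push_cast; ring
  have harg : (c * ((‖z‖ : ℝ) : ℂ))^2
      = Complex.I * (ω:ℂ) * (k:ℂ) * ((x:ℂ)^2 + (y:ℂ)^2) := by
    rw [mul_pow, hc2, habs]
  rw [harg, theta_eq_gg]
  have hexp : Complex.exp (Complex.I * (k:ℂ) * (((Complex.arg z : ℝ) : ℂ) + (ω:ℂ) * (t:ℂ)))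
      = Complex.exp (Complex.I * (k:ℂ) * ((Complex.arg z : ℝ) : ℂ)) *
        Complex.exp (Complex.I * (k:ℂ) * ((ω:ℂ) * (t:ℂ))) := by
    rw [← Complex.exp_add]; ring_nf
  have hkey : Complex.exp (Complex.I * (k:ℂ) * ((Complex.arg z : ℝ) : ℂ)) *
      (((‖z‖ : ℝ) : ℂ))^k = z^k := by
    rcases eq_or_ne z 0 with h0 | h0
    · rw [h0]
      simp [Complex.arg_zero, zero_pow (by omega : k ≠ 0)]
    · have h1 : Complex.I * (k:ℂ) * ((Complex.arg z : ℝ) : ℂ)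
          = (k:ℂ) * (((Complex.arg z : ℝ) : ℂ) * Complex.I) := by ring
      rw [h1, Complex.exp_nat_mul, ← mul_pow, mul_comm (Complex.exp _),
        Complex.norm_mul_exp_arg_mul_I]
  have hpow : (c * ((‖z‖ : ℝ) : ℂ) / 2)^k
      = (c/2)^k * (((‖z‖ : ℝ) : ℂ))^k := by
    rw [← mul_pow]; ring_nf
  rw [hexp, hpow]
  linear_combination (Complex.exp (Complex.I * (k:ℂ) * ((ω:ℂ) * (t:ℂ))) * (c/2)^k *
    gg k (Complex.I * (ω:ℂ) * (k:ℂ) * ((x:ℂ)^2 + (y:ℂ)^2))) * hkey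

/-- For `ω > 0` and an integer `k ≥ 1`, the rotating function
`U(re^{iθ},t) = Re(e^{ik(θ+ωt)} I_k((√(2ωk)/2)(1+i)r))` is an entire eternal
solution of the heat equation `U_t − ΔU = 0` on `ℝ² × ℝ`. -/
theorem rotCaloric_solves_heat (ω : ℝ) (hω : 0 < ω) (k : ℕ) (hk : 1 ≤ k) :
    ∀ x y t : ℝ,
      deriv (fun t' : ℝ => rotCaloric ω k x y t') t
        - (deriv (fun x' : ℝ => deriv (fun x'' : ℝ => rotCaloric ω k x'' y t) x') x +
            deriv (fun y' : ℝ => deriv (fun y'' : ℝ => rotCaloric ω k x y'' t) y') y) = 0 := by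
  intro x y t
  simp only [rotCaloric_eq ω hω.le k hk]
  set μ : ℂ := Complex.I * (ω:ℂ) * (k:ℂ) with hμ
  set C : ℂ := (((Real.sqrt (2*ω*k) / 2 : ℝ) : ℂ) * (1 + Complex.I) / 2) ^ k with hC
  set E : ℂ := Complex.exp (Complex.I * (k:ℂ) * ((ω:ℂ) * (t:ℂ))) * C with hE
  -- basic derivative facts
  have hlin : ∀ a : ℝ, HasDerivAt (fun a' : ℝ => μ*2*(a':ℂ)) (μ*2) a := by
    intro a
    simpa using (hasDerivAt_ofReal a).const_mul (μ*2)
  have hsq : ∀ a : ℝ, HasDerivAt (fun a' : ℝ => ((a':ℂ))^2) (2*(a:ℂ)) a := by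
    intro a
    have := (hasDerivAt_pow 2 ((a:ℂ))).comp_creal (f := fun a' : ℝ => ((a':ℂ))) (hasDerivAt_ofReal a)
    simpa using this
  -- x-direction pieces
  have hzx : ∀ a : ℝ, HasDerivAt (fun a' : ℝ => ((a':ℂ) + (y:ℂ)*Complex.I)) 1 a := by
    intro a
    simpa using (hasDerivAt_ofReal a).add_const ((y:ℂ)*Complex.I)
  have hzxp : ∀ n : ℕ, ∀ a : ℝ, HasDerivAt (fun a' : ℝ => ((a':ℂ) + (y:ℂ)*Complex.I)^n)
      ((n:ℂ) * ((a:ℂ)+(y:ℂ)*Complex.I)^(n-1)) a := by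
    intro n a
    have := (hasDerivAt_pow n ((a:ℂ)+(y:ℂ)*Complex.I)).comp_creal (f := fun a' : ℝ => ((a':ℂ) + (y:ℂ)*Complex.I)) (hzx a)
    simpa using this
  have hsx : ∀ a : ℝ, HasDerivAt (fun a' : ℝ => μ * (((a':ℂ))^2 + ((y:ℂ))^2)) (μ*2*(a:ℂ)) a := by
    intro a
    have := ((hsq a).add_const ((y:ℂ)^2)).const_mul μ
    refine this.congr_deriv ?_
    ring
  have hgx : ∀ a : ℝ, HasDerivAt (fun a' : ℝ => gg k (μ * (((a':ℂ))^2 + ((y:ℂ))^2)))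
      (gg1 k (μ * (((a:ℂ))^2 + ((y:ℂ))^2)) * (μ*2*(a:ℂ))) a := fun a =>
    (hasDerivAt_gg k _).comp_creal (hsx a)
  have hg1x : ∀ a : ℝ, HasDerivAt (fun a' : ℝ => gg1 k (μ * (((a':ℂ))^2 + ((y:ℂ))^2)))
      (gg2 k (μ * (((a:ℂ))^2 + ((y:ℂ))^2)) * (μ*2*(a:ℂ))) a := fun a =>
    (hasDerivAt_gg1 k _).comp_creal (hsx a)
  set W1x : ℝ → ℂ := fun a =>
    (k:ℂ) * ((a:ℂ)+(y:ℂ)*Complex.I)^(k-1) * gg k (μ * (((a:ℂ))^2 + ((y:ℂ))^2))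
      + ((a:ℂ)+(y:ℂ)*Complex.I)^k * gg1 k (μ * (((a:ℂ))^2 + ((y:ℂ))^2)) * (μ*2*(a:ℂ))
    with hW1x_def
  have hW1x : ∀ a : ℝ, HasDerivAt
      (fun a' : ℝ => ((a':ℂ) + (y:ℂ)*Complex.I)^k * gg k (μ * (((a':ℂ))^2 + ((y:ℂ))^2)))
      (W1x a) a := by
    intro a
    have := (hzxp k a).mul (hgx a)
    rw [hW1x_def]
    refine this.congr_deriv ?_
    beta_reduce
    ring
  have hDx1 : ∀ a : ℝ, deriv (fun a'' : ℝ =>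
      (E * (((a'':ℂ) + (y:ℂ)*Complex.I)^k * gg k (μ * (((a'':ℂ))^2 + ((y:ℂ))^2)))).re) a
      = (E * W1x a).re := fun a => (((hW1x a).const_mul E).creal).deriv
  have h2x : deriv (fun a' : ℝ => (E * W1x a').re) x
      = (E * ((k:ℂ)*((k:ℂ)-1)*((x:ℂ)+(y:ℂ)*Complex.I)^(k-1-1)*gg k (μ*((x:ℂ)^2+(y:ℂ)^2))
          + 2*(k:ℂ)*((x:ℂ)+(y:ℂ)*Complex.I)^(k-1)*gg1 k (μ*((x:ℂ)^2+(y:ℂ)^2))*(μ*2*(x:ℂ))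
          + ((x:ℂ)+(y:ℂ)*Complex.I)^k*gg2 k (μ*((x:ℂ)^2+(y:ℂ)^2))*(μ*2*(x:ℂ))^2
          + ((x:ℂ)+(y:ℂ)*Complex.I)^k*gg1 k (μ*((x:ℂ)^2+(y:ℂ)^2))*(μ*2))).re := by
    have T1 := (((hzxp (k-1) x).const_mul (k:ℂ)).mul (hgx x))
    have T2 := (((hzxp k x).mul (hg1x x)).mul (hlin x))
    have H := (((T1.add T2).const_mul E).creal)
    have H2 : HasDerivAt (fun a' : ℝ => (E * W1x a').re) _ x := H
    rw [H2.deriv]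
    congr 1
    push_cast [Nat.cast_sub hk, Pi.mul_apply]
    ring
  -- y-direction pieces
  have hzy : ∀ b : ℝ, HasDerivAt (fun b' : ℝ => ((x:ℂ) + (b':ℂ)*Complex.I)) Complex.I b := by
    intro b
    simpa using ((hasDerivAt_ofReal b).mul_const Complex.I).const_add ((x:ℂ))
  have hzyp : ∀ n : ℕ, ∀ b : ℝ, HasDerivAt (fun b' : ℝ => ((x:ℂ) + (b':ℂ)*Complex.I)^n)
      ((n:ℂ) * ((x:ℂ)+(b:ℂ)*Complex.I)^(n-1) * Complex.I) b := by
    intro n b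
    have := (hasDerivAt_pow n ((x:ℂ)+(b:ℂ)*Complex.I)).comp_creal
      (f := fun b' : ℝ => ((x:ℂ) + (b':ℂ)*Complex.I)) (hzy b)
    simpa [mul_assoc] using this
  have hsy : ∀ b : ℝ, HasDerivAt (fun b' : ℝ => μ * (((x:ℂ))^2 + ((b':ℂ))^2)) (μ*2*(b:ℂ)) b := by
    intro b
    have := ((hsq b).const_add ((x:ℂ)^2)).const_mul μ
    refine this.congr_deriv ?_
    ring
  have hgy : ∀ b : ℝ, HasDerivAt (fun b' : ℝ => gg k (μ * (((x:ℂ))^2 + ((b':ℂ))^2)))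
      (gg1 k (μ * (((x:ℂ))^2 + ((b:ℂ))^2)) * (μ*2*(b:ℂ))) b := fun b =>
    (hasDerivAt_gg k _).comp_creal (hsy b)
  have hg1y : ∀ b : ℝ, HasDerivAt (fun b' : ℝ => gg1 k (μ * (((x:ℂ))^2 + ((b':ℂ))^2)))
      (gg2 k (μ * (((x:ℂ))^2 + ((b:ℂ))^2)) * (μ*2*(b:ℂ))) b := fun b =>
    (hasDerivAt_gg1 k _).comp_creal (hsy b)
  set W1y : ℝ → ℂ := fun b =>
    (k:ℂ) * ((x:ℂ)+(b:ℂ)*Complex.I)^(k-1) * Complex.I * gg k (μ * (((x:ℂ))^2 + ((b:ℂ))^2))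
      + ((x:ℂ)+(b:ℂ)*Complex.I)^k * gg1 k (μ * (((x:ℂ))^2 + ((b:ℂ))^2)) * (μ*2*(b:ℂ))
    with hW1y_def
  have hW1y : ∀ b : ℝ, HasDerivAt
      (fun b' : ℝ => ((x:ℂ) + (b':ℂ)*Complex.I)^k * gg k (μ * (((x:ℂ))^2 + ((b':ℂ))^2)))
      (W1y b) b := by
    intro b
    have := (hzyp k b).mul (hgy b)
    rw [hW1y_def]
    refine this.congr_deriv ?_
    beta_reduce
    ring
  have hDy1 : ∀ b : ℝ, deriv (fun b'' : ℝ =>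
      (E * (((x:ℂ) + (b'':ℂ)*Complex.I)^k * gg k (μ * (((x:ℂ))^2 + ((b'':ℂ))^2)))).re) b
      = (E * W1y b).re := fun b => (((hW1y b).const_mul E).creal).deriv
  have h2y : deriv (fun b' : ℝ => (E * W1y b').re) y
      = (E * ((k:ℂ)*((k:ℂ)-1)*((x:ℂ)+(y:ℂ)*Complex.I)^(k-1-1)*Complex.I*Complex.I*gg k (μ*((x:ℂ)^2+(y:ℂ)^2))
          + 2*(k:ℂ)*((x:ℂ)+(y:ℂ)*Complex.I)^(k-1)*Complex.I*gg1 k (μ*((x:ℂ)^2+(y:ℂ)^2))*(μ*2*(y:ℂ))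
          + ((x:ℂ)+(y:ℂ)*Complex.I)^k*gg2 k (μ*((x:ℂ)^2+(y:ℂ)^2))*(μ*2*(y:ℂ))^2
          + ((x:ℂ)+(y:ℂ)*Complex.I)^k*gg1 k (μ*((x:ℂ)^2+(y:ℂ)^2))*(μ*2))).re := by
    have T1 := ((((hzyp (k-1) y).const_mul (k:ℂ)).mul_const Complex.I).mul (hgy y))
    have T2 := (((hzyp k y).mul (hg1y y)).mul (hlin y))
    have H := (((T1.add T2).const_mul E).creal)
    have H2 : HasDerivAt (fun b' : ℝ => (E * W1y b').re) _ y := H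
    rw [H2.deriv]
    congr 1
    push_cast [Nat.cast_sub hk, Pi.mul_apply]
    ring
  -- t-direction
  have h2t : deriv (fun t' : ℝ =>
      (Complex.exp (Complex.I * (k:ℂ) * ((ω:ℂ) * (t':ℂ))) * C *
        (((x:ℂ) + (y:ℂ)*Complex.I)^k * gg k (μ*((x:ℂ)^2+(y:ℂ)^2)))).re) t
      = (E * (μ * (((x:ℂ) + (y:ℂ)*Complex.I)^k * gg k (μ*((x:ℂ)^2+(y:ℂ)^2))))).re := by
    have h0 : HasDerivAt (fun t' : ℝ => Complex.I*(k:ℂ)*((ω:ℂ)*(t':ℂ)))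
        (Complex.I*(k:ℂ)*(ω:ℂ)) t := by
      have heq : (fun t' : ℝ => Complex.I*(k:ℂ)*((ω:ℂ)*(t':ℂ)))
          = fun t' : ℝ => (Complex.I*(k:ℂ)*(ω:ℂ))*(t':ℂ) := by funext u; ring
      rw [heq]
      simpa using (hasDerivAt_ofReal t).const_mul (Complex.I*(k:ℂ)*(ω:ℂ))
    have H := (((h0.cexp.mul_const C).mul_const
      (((x:ℂ) + (y:ℂ)*Complex.I)^k * gg k (μ*((x:ℂ)^2+(y:ℂ)^2)))).creal)
    convert H.deriv using 2
    rw [hE, hμ]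
    ring
  rw [h2t]
  simp only [hDx1]
  rw [h2x]
  simp only [hDy1]
  rw [h2y]
  rw [← Complex.add_re, ← Complex.sub_re]
  have hre0 : ∀ w : ℂ, w = 0 → w.re = 0 := fun w h => by simp [h]
  apply hre0
  obtain ⟨m, hm⟩ : ∃ m, k = m+1 := ⟨k-1, (Nat.succ_pred_eq_of_pos hk).symm⟩
  subst hm
  have ode := gg_ode (m+1) (μ*((x:ℂ)^2+(y:ℂ)^2))
  simp only [Nat.add_sub_cancel]
  push_cast at ode ⊢
  linear_combination (-(E*μ*((x:ℂ)+(y:ℂ)*Complex.I)^(m+1))) * ode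
    - (E*((m:ℂ)+1)*(m:ℂ)*((x:ℂ)+(y:ℂ)*Complex.I)^(m-1)*gg (m+1) (μ*((x:ℂ)^2+(y:ℂ)^2)))
      * Complex.I_mul_I
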